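/- In the Poisson algebra of power series, for a word w' = p_{γ1} ⋯ p_{γr} of length r in the p-variables and f of even degree, the r-fold iterated bracket (1/r!){…{{w', f}, f}…, f} (with r brackets) equals κ_{γ1} ⋯ κ_{γr} · (∂f/∂p_{γ1}) ⋯ (∂f/∂p_{γr}); i.e. restricting a monomial of pure p-degree r to the Lagrangian graph L_f of df coincides with the normalized r-fold bracket with f. -/
import Mathlib


open MvPolynomial

/-- The graded Poisson bracket on the algebra of polynomials in the variables
`p γ = X (Sum.inl γ)` and `q γ = X (Sum.inr γ)`, determined by
`{p γ, q γ'} = κ γ δ_{γγ'}` and the Leibniz rule: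
`{F, G} = Σ_γ κ γ (∂F/∂p_γ ∂G/∂q_γ - ∂F/∂q_γ ∂G/∂p_γ)`. -/
noncomputable def pbracket {Γ : Type*} [Fintype Γ] (κ : Γ → ℤ)
    (F G : MvPolynomial (Γ ⊕ Γ) ℚ) : MvPolynomial (Γ ⊕ Γ) ℚ :=
  ∑ γ : Γ, (κ γ : MvPolynomial (Γ ⊕ Γ) ℚ) *
    (pderiv (Sum.inl γ) F * pderiv (Sum.inr γ) G
      - pderiv (Sum.inr γ) F * pderiv (Sum.inl γ) G)

set_option linter.unusedSectionVars false

section Aux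
variable {Γ : Type*} [Fintype Γ] [DecidableEq Γ] (κ : Γ → ℤ)
variable (f₀ : MvPolynomial Γ ℚ)

lemma pderiv_inl_rename (δ : Γ) : pderiv (Sum.inl δ) (rename (Sum.inr : Γ → Γ ⊕ Γ) f₀) = 0 := by
  apply pderiv_eq_zero_of_notMem_vars
  intro h
  have := vars_rename (Sum.inr : Γ → Γ ⊕ Γ) f₀ h
  simp at this

-- D is additive
lemma pb_add (f A B : MvPolynomial (Γ ⊕ Γ) ℚ) :
    pbracket κ (A + B) f = pbracket κ A f + pbracket κ B f := by
  simp only [pbracket, map_add]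
  rw [← Finset.sum_add_distrib]
  congr 1; ext δ; ring

lemma pb_zero (f : MvPolynomial (Γ ⊕ Γ) ℚ) : pbracket κ 0 f = 0 := by
  simp [pbracket]

-- with f q-only, D is a derivation in first slot
lemma pb_mul (A B : MvPolynomial (Γ ⊕ Γ) ℚ)
    (f : MvPolynomial (Γ ⊕ Γ) ℚ) (hf : f = rename Sum.inr f₀) :
    pbracket κ (A * B) f = pbracket κ A f * B + A * pbracket κ B f := by
  subst hf
  simp only [pbracket, pderiv_inl_rename, mul_zero, sub_zero, pderiv_mul]
  rw [Finset.sum_mul, Finset.mul_sum, ← Finset.sum_add_distrib]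
  congr 1; ext δ; ring

-- q-only constants pull out
lemma pb_qmul (c A : MvPolynomial (Γ ⊕ Γ) ℚ)
    (hc : ∀ δ, pderiv (Sum.inl δ) c = 0)
    (f : MvPolynomial (Γ ⊕ Γ) ℚ) (hf : f = rename Sum.inr f₀) :
    pbracket κ (c * A) f = c * pbracket κ A f := by
  subst hf
  simp only [pbracket, pderiv_inl_rename, mul_zero, sub_zero, pderiv_mul, hc, zero_mul, zero_add]
  rw [Finset.mul_sum]
  congr 1; ext δ; ring

lemma pb_X (δ : Γ) (f : MvPolynomial (Γ ⊕ Γ) ℚ) (hf : f = rename Sum.inr f₀) :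
    pbracket κ (X (Sum.inl δ)) f = (κ δ : MvPolynomial (Γ ⊕ Γ) ℚ) * pderiv (Sum.inr δ) f := by
  subst hf
  simp only [pbracket, pderiv_inl_rename, mul_zero, sub_zero]
  rw [Finset.sum_eq_single δ]
  · simp
  · intro b _ hb; simp [Ne.symm hb]
  · simp

end Aux

section Main
variable {Γ : Type*} [Fintype Γ] [DecidableEq Γ] (κ : Γ → ℤ)

lemma iter_add (f : MvPolynomial (Γ ⊕ Γ) ℚ) (n : ℕ) (A B : MvPolynomial (Γ ⊕ Γ) ℚ) :
    (fun G => pbracket κ G f)^[n] (A + B)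
      = (fun G => pbracket κ G f)^[n] A + (fun G => pbracket κ G f)^[n] B := by
  induction n generalizing A B with
  | zero => simp
  | succ n ih =>
    rw [Function.iterate_succ_apply, Function.iterate_succ_apply, Function.iterate_succ_apply]
    show (fun G => pbracket κ G f)^[n] (pbracket κ (A + B) f) = _
    rw [pb_add, ih]

lemma iter_zero (f : MvPolynomial (Γ ⊕ Γ) ℚ) (n : ℕ) :
    (fun G => pbracket κ G f)^[n] 0 = 0 := by
  induction n with
  | zero => simp
  | succ n ih => rw [Function.iterate_succ_apply]; show (fun G => pbracket κ G f)^[n] (pbracket κ 0 f) = 0; rw [pb_zero, ih]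

lemma iter_sum (f : MvPolynomial (Γ ⊕ Γ) ℚ) (n : ℕ) {ι : Type*} (s : Finset ι)
    (F : ι → MvPolynomial (Γ ⊕ Γ) ℚ) :
    (fun G => pbracket κ G f)^[n] (∑ i ∈ s, F i) = ∑ i ∈ s, (fun G => pbracket κ G f)^[n] (F i) := by
  induction s using Finset.cons_induction with
  | empty => simpa using iter_zero κ f n
  | cons a t h ih => rw [Finset.sum_cons, Finset.sum_cons, iter_add, ih]

lemma iter_qmul (f₀ : MvPolynomial Γ ℚ) (f : MvPolynomial (Γ ⊕ Γ) ℚ) (hf : f = rename Sum.inr f₀)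
    (n : ℕ) (c A : MvPolynomial (Γ ⊕ Γ) ℚ) (hc : ∀ δ, pderiv (Sum.inl δ) c = 0) :
    (fun G => pbracket κ G f)^[n] (c * A) = c * (fun G => pbracket κ G f)^[n] A := by
  induction n generalizing A with
  | zero => simp
  | succ n ih =>
    rw [Function.iterate_succ_apply, Function.iterate_succ_apply]
    show (fun G => pbracket κ G f)^[n] (pbracket κ (c * A) f) = _
    rw [pb_qmul κ f₀ c A hc f hf, ih]

lemma pb_prod (f₀ : MvPolynomial Γ ℚ) (f : MvPolynomial (Γ ⊕ Γ) ℚ) (hf : f = rename Sum.inr f₀)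
    {r : ℕ} (γ : Fin r → Γ) (s : Finset (Fin r)) :
    pbracket κ (∏ i ∈ s, X (Sum.inl (γ i))) f
      = ∑ i ∈ s, ((κ (γ i) : MvPolynomial (Γ ⊕ Γ) ℚ) * pderiv (Sum.inr (γ i)) f)
          * ∏ j ∈ s.erase i, X (Sum.inl (γ j)) := by
  induction s using Finset.induction with
  | empty => simp [pbracket, pderiv_one]
  | @insert a s ha ih =>
    rw [Finset.prod_insert ha, pb_mul κ f₀ _ _ f hf, pb_X κ f₀ _ f hf, ih,
      Finset.sum_insert ha, Finset.erase_insert ha, Finset.mul_sum]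
    congr 1
    apply Finset.sum_congr rfl
    intro i hi
    rw [Finset.erase_insert_of_ne (by rintro rfl; exact ha hi),
      Finset.prod_insert (fun h => ha (Finset.mem_of_mem_erase h))]
    ring

lemma hc_main (f₀ : MvPolynomial Γ ℚ) (f : MvPolynomial (Γ ⊕ Γ) ℚ) (hf : f = rename Sum.inr f₀)
    (g : Γ) (δ : Γ) :
    pderiv (Sum.inl δ) ((κ g : MvPolynomial (Γ ⊕ Γ) ℚ) * pderiv (Sum.inr g) f) = 0 := by
  subst hf
  rw [pderiv_rename Sum.inr_injective, show ((κ g : MvPolynomial (Γ ⊕ Γ) ℚ))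
      = rename (Sum.inr : Γ → Γ ⊕ Γ) (κ g : MvPolynomial Γ ℚ) by simp,
    ← map_mul, pderiv_inl_rename]

lemma key (f₀ : MvPolynomial Γ ℚ) (f : MvPolynomial (Γ ⊕ Γ) ℚ) (hf : f = rename Sum.inr f₀)
    {r : ℕ} (γ : Fin r → Γ) :
    ∀ (n : ℕ) (s : Finset (Fin r)), s.card = n →
    (fun G => pbracket κ G f)^[n] (∏ i ∈ s, X (Sum.inl (γ i)))
      = (n.factorial : ℚ) • ∏ i ∈ s, ((κ (γ i) : MvPolynomial (Γ ⊕ Γ) ℚ) * pderiv (Sum.inr (γ i)) f) := by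
  intro n
  induction n with
  | zero => intro s hs; rw [Finset.card_eq_zero] at hs; subst hs; simp
  | succ n ih =>
    intro s hs
    rw [Function.iterate_succ_apply]
    show (fun G => pbracket κ G f)^[n] (pbracket κ (∏ i ∈ s, X (Sum.inl (γ i))) f) = _
    rw [pb_prod κ f₀ f hf γ s, iter_sum]
    have step : ∀ i ∈ s, (fun G => pbracket κ G f)^[n]
        (((κ (γ i) : MvPolynomial (Γ ⊕ Γ) ℚ) * pderiv (Sum.inr (γ i)) f)
          * ∏ j ∈ s.erase i, X (Sum.inl (γ j)))
        = (n.factorial : ℚ) • ∏ j ∈ s, ((κ (γ j) : MvPolynomial (Γ ⊕ Γ) ℚ) * pderiv (Sum.inr (γ j)) f) := by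
      intro i hi
      rw [iter_qmul κ f₀ f hf n _ _ (hc_main κ f₀ f hf (γ i)),
        ih (s.erase i) (by rw [Finset.card_erase_of_mem hi, hs]; rfl),
        mul_smul_comm,
        Finset.mul_prod_erase s
          (fun j => (κ (γ j) : MvPolynomial (Γ ⊕ Γ) ℚ) * pderiv (Sum.inr (γ j)) f) hi]
    rw [Finset.sum_congr rfl step, Finset.sum_const, hs, ← Nat.cast_smul_eq_nsmul ℚ, smul_smul]
    congr 1
    rw [Nat.factorial_succ]
    push_cast
    ring

end Main

/-- For a word `w' = p_{γ₁} ⋯ p_{γᵣ}` of length `r` in the `p`-variables and `f`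
(of even degree) depending only on the dual variables, the normalized `r`-fold
iterated bracket `(1/r!) {…{{w', f}, f}…, f}` equals
`κ_{γ₁} ⋯ κ_{γᵣ} · (∂f/∂q_{γ₁}) ⋯ (∂f/∂q_{γᵣ})`, i.e. it coincides with the
restriction of the monomial `w'` of pure `p`-degree `r` to the Lagrangian graph
`L_f` of `df` (substituting each `p_γ` by `κ_γ ∂f/∂q_γ`). -/
theorem stmt19 {Γ : Type*} [Fintype Γ] [DecidableEq Γ] (κ : Γ → ℤ)
    (r : ℕ) (γ : Fin r → Γ)
    (f₀ : MvPolynomial Γ ℚ)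
    (f : MvPolynomial (Γ ⊕ Γ) ℚ) (hf : f = rename Sum.inr f₀) :
    ((r.factorial : ℚ)⁻¹) • (fun G => pbracket κ G f)^[r] (∏ i, X (Sum.inl (γ i)))
      = ∏ i, (κ (γ i) : MvPolynomial (Γ ⊕ Γ) ℚ) * pderiv (Sum.inr (γ i)) f := by
  rw [key κ f₀ f hf γ r Finset.univ (by simp), smul_smul,
    inv_mul_cancel₀ (by exact_mod_cast Nat.factorial_ne_zero r), one_smul]
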